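/- For every integer n ≥ 5, there exists a real number r with 2^{−n} < r < 2^{−n} + 2n·4^{−n} such that g_n(2 − 2r) = 0; that is, g_n has a real root in the open interval (2 − 2(2^{−n} + 2n·4^{−n}), 2 − 2·2^{−n}). -/

import Mathlib

open Polynomial
set_option maxHeartbeats 1000000


private lemma key_nat : ∀ n : ℕ, 5 ≤ n → 4*n*2^n + 4*n^2 < 4^n := by
  intro n hn
  induction n, hn using Nat.le_induction with
  | base => norm_num
  | succ m hm ih =>
    have h2 : (32:ℕ) ≤ 2^m := by
      calc (32:ℕ) = 2^5 := by norm_num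
      _ ≤ 2^m := Nat.pow_le_pow_right (by norm_num) hm
    have : 4*(m+1)*2^(m+1) + 4*(m+1)^2 ≤ 4*(4*m*2^m + 4*m^2) := by
      have hm1 : 1 ≤ m := by omega
      ring_nf
      nlinarith [h2, hm1]
    calc 4*(m+1)*2^(m+1) + 4*(m+1)^2 ≤ 4*(4*m*2^m + 4*m^2) := this
    _ < 4*4^m := by omega
    _ = 4^(m+1) := by ring

private def F (n : ℕ) (r : ℝ) : ℝ := (2-2*r)^(n+1) - 2*(2-2*r)^n + 2

private lemma F_cont (n : ℕ) : Continuous (F n) := by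
  unfold F; fun_prop

private lemma aux (n : ℕ) (hn : 5 ≤ n) :
    ∃ r : ℝ, 1/2^n < r ∧ r < 1/2^n + 2*(n:ℝ)/4^n ∧ F n r = 0 := by
  have hp0 : (0:ℝ) < 2^n := by positivity
  have hp32 : (32:ℝ) ≤ 2^n := by
    calc (32:ℝ) = 2^5 := by norm_num
    _ ≤ 2^n := pow_le_pow_right₀ (by norm_num) hn
  have h4eq : (4:ℝ)^n = 2^n * 2^n := by rw [← mul_pow]; norm_num
  have hkey : 4*(n:ℝ)*2^n + 4*(n:ℝ)^2 < 2^n * 2^n := by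
    have h := key_nat n hn
    have h' : ((4*n*2^n + 4*n^2 : ℕ) : ℝ) < ((4^n : ℕ) : ℝ) := by exact_mod_cast h
    push_cast at h'
    rw [h4eq] at h'
    linarith
  have hn5 : (5:ℝ) ≤ n := by exact_mod_cast hn
  set a : ℝ := 1/2^n with ha
  set b : ℝ := 1/2^n + 2*(n:ℝ)/4^n with hb
  have haval : a * 2^n = 1 := by rw [ha]; field_simp
  have ha32 : a ≤ 1/32 := by
    rw [ha]; exact one_div_le_one_div_of_le (by norm_num) hp32
  have ha0 : 0 < a := by rw [ha]; positivity
  have hab : a < b := by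
    have : (0:ℝ) < 2*(n:ℝ)/4^n := by positivity
    rw [ha, hb]; linarith
  have hble : b ≤ 1/8 := by
    rw [hb, h4eq, div_add_div _ _ (ne_of_gt hp0) (by positivity)]
    rw [div_le_iff₀ (by positivity)]
    nlinarith [hkey, hp32, hn5]
  have hb0 : 0 < b := lt_trans ha0 hab
  clear_value a b
  -- F n a > 0
  have hfa : 0 < F n a := by
    have h1 : (2 - 2*a)^n = 2^n * (1-a)^n := by rw [← mul_pow]; ring_nf
    have ha1 : (1 - a)^n < 1 :=
      pow_lt_one₀ (by linarith) (by linarith) (by omega)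
    have : F n a = 2 - 2*(a*2^n)*(1-a)^n := by
      unfold F; rw [pow_succ, h1]; ring
    rw [this, haval]
    linarith
  -- F n b < 0
  have hfb : F n b < 0 := by
    have h1 : (2 - 2*b)^n = 2^n * (1-b)^n := by rw [← mul_pow]; ring_nf
    have hbern : 1 - (n:ℝ)*b ≤ (1-b)^n := by
      have := one_add_mul_le_pow (a := -b) (by linarith) n
      simp only [mul_neg, ← sub_eq_add_neg] at this; linarith
    have hfbeq : F n b = 2 - 2*b*(2^n * (1-b)^n) := by
      unfold F; rw [pow_succ, h1]; ring
    rw [hfbeq]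
    have hgoal : 1 < b * (2^n * (1 - (n:ℝ)*b)) := by
      have hbval : b * 2^n = 1 + 2*n/2^n := by
        rw [hb, h4eq]; field_simp
      have hnb : (n:ℝ)*b = n/2^n + 2*n^2/(2^n*2^n) := by
        rw [hb, h4eq]; field_simp
      have expand : b * (2^n * (1 - (n:ℝ)*b)) =
          (1 + 2*n/2^n) * (1 - (n/2^n + 2*n^2/(2^n*2^n))) := by
        rw [← hbval, ← hnb]; ring
      rw [expand]
      have h1 : (1 + 2*(n:ℝ)/2^n) * (1 - (n/2^n + 2*n^2/(2^n*2^n)))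
          = 1 + (n/2^n) * (1 - (4*n/2^n + 4*n^2/(2^n*2^n))) := by
        field_simp; ring
      rw [h1]
      have hpos : 0 < (n:ℝ)/2^n := by positivity
      have h2 : 4*(n:ℝ)/2^n + 4*n^2/(2^n*2^n) < 1 := by
        rw [div_add_div _ _ (ne_of_gt hp0) (by positivity), div_lt_one (by positivity)]
        nlinarith [hkey, hp0]
      nlinarith [hpos, h2]
    have hmono : b * (2^n * (1 - (n:ℝ)*b)) ≤ b * (2^n * (1-b)^n) :=
      mul_le_mul_of_nonneg_left
        (mul_le_mul_of_nonneg_left hbern (le_of_lt hp0)) (le_of_lt hb0)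
    nlinarith [lt_of_lt_of_le hgoal hmono]
  -- IVT
  have h0 : (0:ℝ) ∈ Set.Ioo (F n b) (F n a) := ⟨hfb, hfa⟩
  obtain ⟨r, hr, hr0⟩ :=
    intermediate_value_Ioo' (le_of_lt hab) (F_cont n).continuousOn h0
  exact ⟨r, hr.1, hr.2, hr0⟩

/-- For every `n ≥ 5`, the polynomial `g_n = X^{n+1} - 2X^n + 2` has a real root `2 - 2r`
with `2^{-n} < r < 2^{-n} + 2n·4^{-n}`. -/
theorem g_real_root_near_two (n : ℕ) (hn : 5 ≤ n) :
    ∃ r : ℝ, 1/2^n < r ∧ r < 1/2^n + 2*n/4^n ∧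
      Polynomial.eval (2 - 2*r) (X ^ (n + 1) - C 2 * X ^ n + C 2 : ℝ[X]) = 0 := by
  obtain ⟨r, h1, h2, h3⟩ := aux n hn
  refine ⟨r, h1, h2, ?_⟩
  unfold F at h3
  simp only [eval_add, eval_sub, eval_pow, eval_mul, eval_C, eval_X]
  linarith [h3]
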